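/- Let n be even, X a set, and x_1,…,x_n ∈ X. Let w*, h, φ_1,…,φ_L : X → ℝ be functions, D_0 = {1,…,n/2}, D_1 = {n/2+1,…,n}, and k_L(x,y) = ∑_{ℓ=1}^L φ_ℓ(x)φ_ℓ(y). Define β̂_{ℓ,0} = (2/n) ∑_{i∈D_0} h(x_i) φ_ℓ(x_i) w*(x_i), ĥ_{D_0}(x) = ∑_{ℓ=1}^L β̂_{ℓ,0} φ_ℓ(x), Ẑ_0[h] = (2/n) ∑_{i∈D_1} w*(x_i)(h(x_i) − ĥ_{D_0}(x_i)), and symmetrically Ẑ_1[h] with the roles of D_0 and D_1 exchanged, and set Ẑ[h] = (Ẑ_0[h] + Ẑ_1[h])/2. Then Ẑ[h] = ∑_{i=1}^n w_i h(x_i), where w_i = (1/n) w*(x_i) − (2/n²) ∑_{j∈D_1} w*(x_i) w*(x_j) k_L(x_j, x_i) for i ∈ D_0, and w_i = (1/n) w*(x_i) − (2/n²) ∑_{j∈D_0} w*(x_i) w*(x_j) k_L(x_j, x_i) for i ∈ D_1. -/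

import Mathlib

/-- **Lemma B.4** (`lem:defw`) of the paper: the two-fold control-variate estimator
`Ẑ[h] = (Ẑ_0[h] + Ẑ_1[h])/2` built from a truncated orthogonal series with `L` basis
functions `φ_1, …, φ_L` can be written as a weighted sum `∑_i w_i h(x_i)` with explicit
reference weights `w_i` that do not depend on the test function `h`.  Here `n = 2m`,
the folds are `D_0 = {i < m}` and `D_1 = {i ≥ m}`, and
`k_L(x,y) = ∑_{ℓ} φ_ℓ(x) φ_ℓ(y)`. -/
theorem stmt6 {X : Type*} (m : ℕ) (x : Fin (2 * m) → X)
    (wst h : X → ℝ) (L : ℕ) (φ : Fin L → X → ℝ)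
    (kL : X → X → ℝ) (hkL : ∀ a b, kL a b = ∑ ℓ, φ ℓ a * φ ℓ b)
    (D0 D1 : Finset (Fin (2 * m)))
    (hD0 : D0 = Finset.univ.filter fun i : Fin (2 * m) => (i : ℕ) < m)
    (hD1 : D1 = Finset.univ.filter fun i : Fin (2 * m) => m ≤ (i : ℕ))
    (β0 β1 : Fin L → ℝ)
    (hβ0 : ∀ ℓ, β0 ℓ = (2 / (2 * m : ℝ)) * ∑ i ∈ D0, h (x i) * φ ℓ (x i) * wst (x i))
    (hβ1 : ∀ ℓ, β1 ℓ = (2 / (2 * m : ℝ)) * ∑ i ∈ D1, h (x i) * φ ℓ (x i) * wst (x i))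
    (hhat0 hhat1 : X → ℝ)
    (hhat0_def : ∀ a, hhat0 a = ∑ ℓ, β0 ℓ * φ ℓ a)
    (hhat1_def : ∀ a, hhat1 a = ∑ ℓ, β1 ℓ * φ ℓ a)
    (Z0 Z1 Z : ℝ)
    (hZ0 : Z0 = (2 / (2 * m : ℝ)) * ∑ i ∈ D1, wst (x i) * (h (x i) - hhat0 (x i)))
    (hZ1 : Z1 = (2 / (2 * m : ℝ)) * ∑ i ∈ D0, wst (x i) * (h (x i) - hhat1 (x i)))
    (hZ : Z = (Z0 + Z1) / 2)
    (w : Fin (2 * m) → ℝ)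
    (hw : ∀ i, w i =
      if (i : ℕ) < m then
        (1 / (2 * m : ℝ)) * wst (x i)
          - (2 / (2 * m : ℝ) ^ 2) * ∑ j ∈ D1, wst (x i) * wst (x j) * kL (x j) (x i)
      else
        (1 / (2 * m : ℝ)) * wst (x i)
          - (2 / (2 * m : ℝ) ^ 2) * ∑ j ∈ D0, wst (x i) * wst (x j) * kL (x j) (x i)) :
    Z = ∑ i, w i * h (x i) := by
  set c : ℝ := 2 / (2 * m : ℝ) with hc
  have key0 : ∑ i ∈ D1, wst (x i) * hhat0 (x i)
      = c * ∑ i ∈ D0, (∑ j ∈ D1, wst (x i) * wst (x j) * kL (x j) (x i)) * h (x i) := by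
    have e1 : ∀ i, wst (x i) * hhat0 (x i)
        = ∑ j ∈ D0, ∑ ℓ, c * (wst (x i) * wst (x j) * (φ ℓ (x j) * φ ℓ (x i)) * h (x j)) := by
      intro i
      simp only [hhat0_def, hβ0, Finset.mul_sum, Finset.sum_mul]
      rw [Finset.sum_comm]
      exact Finset.sum_congr rfl fun j _ => Finset.sum_congr rfl fun ℓ _ => by ring
    rw [Finset.sum_congr rfl fun i _ => e1 i, Finset.sum_comm, Finset.mul_sum]
    refine Finset.sum_congr rfl fun j _ => ?_
    simp only [hkL, Finset.mul_sum, Finset.sum_mul]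
    exact Finset.sum_congr rfl fun i _ => Finset.sum_congr rfl fun ℓ _ => by ring
  have key1 : ∑ i ∈ D0, wst (x i) * hhat1 (x i)
      = c * ∑ i ∈ D1, (∑ j ∈ D0, wst (x i) * wst (x j) * kL (x j) (x i)) * h (x i) := by
    have e1 : ∀ i, wst (x i) * hhat1 (x i)
        = ∑ j ∈ D1, ∑ ℓ, c * (wst (x i) * wst (x j) * (φ ℓ (x j) * φ ℓ (x i)) * h (x j)) := by
      intro i
      simp only [hhat1_def, hβ1, Finset.mul_sum, Finset.sum_mul]
      rw [Finset.sum_comm]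
      exact Finset.sum_congr rfl fun j _ => Finset.sum_congr rfl fun ℓ _ => by ring
    rw [Finset.sum_congr rfl fun i _ => e1 i, Finset.sum_comm, Finset.mul_sum]
    refine Finset.sum_congr rfl fun j _ => ?_
    simp only [hkL, Finset.mul_sum, Finset.sum_mul]
    exact Finset.sum_congr rfl fun i _ => Finset.sum_congr rfl fun ℓ _ => by ring
  have hsplit : ∑ i, w i * h (x i)
      = (∑ i ∈ D0, w i * h (x i)) + ∑ i ∈ D1, w i * h (x i) := by
    rw [hD0, hD1,
      ← Finset.sum_filter_add_sum_filter_not Finset.univ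
        (fun i : Fin (2 * m) => (i : ℕ) < m) (fun i => w i * h (x i))]
    simp [not_lt]
  have hw0 : ∀ i ∈ D0, w i * h (x i)
      = ((c/2) * wst (x i)
          - (c^2/2) * ∑ j ∈ D1, wst (x i) * wst (x j) * kL (x j) (x i)) * h (x i) := by
    intro i hi
    rw [hD0] at hi
    have him : (i : ℕ) < m := (Finset.mem_filter.mp hi).2
    rw [hw i, if_pos him, hc]
    by_cases hm : (2 * m : ℝ) = 0
    · simp [hm]
    · field_simp
  have hw1 : ∀ i ∈ D1, w i * h (x i)
      = ((c/2) * wst (x i)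
          - (c^2/2) * ∑ j ∈ D0, wst (x i) * wst (x j) * kL (x j) (x i)) * h (x i) := by
    intro i hi
    rw [hD1] at hi
    have him : ¬ (i : ℕ) < m := not_lt.mpr (Finset.mem_filter.mp hi).2
    rw [hw i, if_neg him, hc]
    by_cases hm : (2 * m : ℝ) = 0
    · simp [hm]
    · field_simp
  rw [hsplit, Finset.sum_congr rfl hw0, Finset.sum_congr rfl hw1, hZ, hZ0, hZ1]
  simp only [mul_sub, Finset.sum_sub_distrib]
  rw [key0, key1]
  simp only [sub_mul, mul_assoc, Finset.sum_sub_distrib, ← Finset.mul_sum]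
  ring
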